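/- Let $p_1(x),\dots,p_n(x)$ be the entropy-maximizing barycentric weights at an interior point $x$ of a polytope with vertices $a_1,\dots,a_n$. If $x = \sum_k q_k a_k$ is any affine representation with $\sum_k q_k = 1$ (coefficients $q_k$ real, not necessarily nonnegative), then $\sum_k q_k / p_k(x) = n$. -/

import Mathlib

open Finset

/-- The entropy function of a polytope with vertices `a 1, …, a n`:
`U(x) = sup { ∑ᵢ ln pᵢ : pᵢ > 0, ∑ pᵢ = 1, ∑ pᵢ aᵢ = x }`. -/
noncomputable def entropyU {d n : ℕ} (a : Fin n → EuclideanSpace ℝ (Fin d))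
    (x : EuclideanSpace ℝ (Fin d)) : ℝ :=
  sSup {s | ∃ p : Fin n → ℝ, (∀ i, 0 < p i) ∧ ∑ i, p i = 1 ∧
    ∑ i, p i • a i = x ∧ s = ∑ i, Real.log (p i)}

/-- If `x = ∑ₖ qₖ aₖ` with `∑ₖ qₖ = 1` (real coefficients), then
`∑ₖ qₖ / pₖ(x) = n`. -/
theorem stmt_10 {d n : ℕ} (hn : 2 ≤ n) (a : Fin n → EuclideanSpace ℝ (Fin d))
    (ha : Function.Injective a)
    (P : Set (EuclideanSpace ℝ (Fin d)))
    (hP : P = convexHull ℝ (Set.range a))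
    (hvert : ∀ i, a i ∈ Set.extremePoints ℝ P)
    (hint : (interior P).Nonempty)
    (p : EuclideanSpace ℝ (Fin d) → Fin n → ℝ)
    (hp : ∀ x ∈ interior P, (∀ i, 0 < p x i) ∧ ∑ i, p x i = 1 ∧
      ∑ i, p x i • a i = x ∧ ∑ i, Real.log (p x i) = entropyU a x) :
    ∀ x ∈ interior P, ∀ q : Fin n → ℝ,
      ∑ k, q k = 1 → x = ∑ k, q k • a k →
      ∑ k, q k / p x k = (n : ℝ) := by
  intro x hx q hq hxq
  obtain ⟨hpos, hsum, hrep, hU⟩ := hp x hx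
  set c : Fin n → ℝ := fun i => q i - p x i with hc
  set f : ℝ → ℝ := fun t => ∑ i, Real.log (p x i + t * c i) with hf
  have hcsum : ∑ i, c i = 0 := by
    simp [hc, Finset.sum_sub_distrib, hq, hsum]
  have hcrep : ∑ i, c i • a i = 0 := by
    simp only [hc, sub_smul, Finset.sum_sub_distrib, hrep, ← hxq]
    simp
  -- the set defining entropyU is bounded above by 0
  have hbdd : BddAbove {s | ∃ pp : Fin n → ℝ, (∀ i, 0 < pp i) ∧ ∑ i, pp i = 1 ∧
      ∑ i, pp i • a i = x ∧ s = ∑ i, Real.log (pp i)} := by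
    refine ⟨0, ?_⟩
    rintro s ⟨pp, hpp, hs1, -, rfl⟩
    apply Finset.sum_nonpos
    intro i _
    refine Real.log_nonpos (hpp i).le ?_
    calc pp i ≤ ∑ j, pp j := Finset.single_le_sum (fun j _ => (hpp j).le) (Finset.mem_univ i)
    _ = 1 := hs1
  have hmax : IsLocalMax f 0 := by
    have hev : ∀ᶠ t in nhds (0 : ℝ), ∀ i, 0 < p x i + t * c i := by
      rw [Filter.eventually_all]
      intro i
      have hcont : ContinuousAt (fun t : ℝ => p x i + t * c i) 0 := by fun_prop
      have h0 : (0 : ℝ) < p x i + 0 * c i := by simpa using hpos i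
      exact hcont.eventually (eventually_gt_nhds h0)
    filter_upwards [hev] with t ht
    have hf0 : f 0 = entropyU a x := by
      simp only [hf, zero_mul, add_zero]
      exact hU
    rw [hf0]
    apply le_csSup hbdd
    refine ⟨fun i => p x i + t * c i, ht, ?_, ?_, rfl⟩
    · rw [Finset.sum_add_distrib, hsum, ← Finset.mul_sum, hcsum, mul_zero, add_zero]
    · have : ∑ i, (p x i + t * c i) • a i = ∑ i, p x i • a i + t • ∑ i, c i • a i := by
        rw [Finset.smul_sum, ← Finset.sum_add_distrib]
        refine Finset.sum_congr rfl fun i _ => ?_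
        rw [add_smul, smul_smul]
      rw [this, hcrep, smul_zero, add_zero, hrep]
  have hderiv : HasDerivAt f (∑ i, (1 * c i) / (p x i + 0 * c i)) 0 := by
    apply HasDerivAt.fun_sum
    intro i _
    have h1 : HasDerivAt (fun t : ℝ => p x i + t * c i) (1 * c i) 0 :=
      ((hasDerivAt_id 0).mul_const (c i)).const_add (p x i)
    exact h1.log (by simpa using (hpos i).ne')
  have hzero : ∑ i, (1 * c i) / (p x i + 0 * c i) = 0 :=
    hmax.hasDerivAt_eq_zero hderiv
  have hzero' : ∑ i, c i / p x i = 0 := by simpa using hzero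
  have : ∑ k, q k / p x k = ∑ k, (c k / p x k + 1) := by
    refine Finset.sum_congr rfl fun k _ => ?_
    rw [hc, sub_div, div_self (hpos k).ne']
    ring
  rw [this, Finset.sum_add_distrib, hzero']
  simp
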